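/- Let F : ℝ^d → ℝ be H-smooth and λ-strongly convex, and let 0 < η ≤ 1/H. Then for all x, y ∈ ℝ^d, ‖x − η∇F(x) − y + η∇F(y)‖² ≤ (1 − λη)‖x − y‖². -/

import Mathlib

open scoped RealInnerProductSpace

private lemma cocoercive_aux {E : Type*} [NormedAddCommGroup E] [InnerProductSpace ℝ E]
    (F : E → ℝ) (gradF : E → E) (H lam : ℝ) (hH : 0 < H) (hlam : 0 ≤ lam)
    (hsc : ∀ x y, lam / 2 * ‖y - x‖ ^ 2 ≤ F y - F x - ⟪gradF x, y - x⟫)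
    (hsm : ∀ x y, F y - F x - ⟪gradF x, y - x⟫ ≤ H / 2 * ‖y - x‖ ^ 2)
    (x y : E) :
    1 / (2 * H) * ‖gradF y - gradF x‖ ^ 2 ≤ F y - F x - ⟪gradF x, y - x⟫ := by
  set g := gradF y - gradF x with hg
  set z := y - (1 / H) • g with hzdef
  have h1 : (0 : ℝ) ≤ F z - F x - ⟪gradF x, z - x⟫ :=
    le_trans (by positivity) (hsc x z)
  have h2 := hsm y z
  have hzy : z - y = -((1 / H) • g) := by rw [hzdef]; abel
  have hzx : z - x = (y - x) - (1 / H) • g := by rw [hzdef]; abel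
  have e1 : ⟪gradF y, z - y⟫ = -(1 / H * ⟪gradF y, g⟫) := by
    rw [hzy, inner_neg_right, real_inner_smul_right]
  have e2 : ‖z - y‖ ^ 2 = (1 / H) ^ 2 * ‖g‖ ^ 2 := by
    rw [hzy, norm_neg, norm_smul]
    simp [mul_pow, abs_of_pos (by positivity : (0:ℝ) < 1 / H)]
  have e3 : ⟪gradF x, z - x⟫ = ⟪gradF x, y - x⟫ - 1 / H * ⟪gradF x, g⟫ := by
    rw [hzx, inner_sub_right, real_inner_smul_right]
  have e4 : ⟪gradF y, g⟫ - ⟪gradF x, g⟫ = ‖g‖ ^ 2 := by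
    rw [← inner_sub_left, ← hg, real_inner_self_eq_norm_sq]
  rw [e3] at h1
  rw [e1, e2] at h2
  have hH' : H ≠ 0 := ne_of_gt hH
  have e4' : 1 / H * ⟪gradF y, g⟫ - 1 / H * ⟪gradF x, g⟫ = 1 / H * ‖g‖ ^ 2 := by
    rw [← mul_sub, e4]
  have hid : H / 2 * ((1 / H) ^ 2 * ‖g‖ ^ 2) = 1 / (2 * H) * ‖g‖ ^ 2 := by
    field_simp
  have hid2 : 1 / H * ‖g‖ ^ 2 = 2 * (1 / (2 * H) * ‖g‖ ^ 2) := by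
    field_simp
  linarith

/-- If `F : ℝ^d → ℝ` is `H`-smooth and `λ`-strongly convex (in the sense that
`(λ/2)‖x−y‖² ≤ F y − F x − ⟪∇F x, y−x⟫ ≤ (H/2)‖x−y‖²` for all `x, y`), and `0 < η ≤ 1/H`, then
the gradient step map is a `(1 − λη)`-contraction in squared norm:
`‖x − η∇F x − y + η∇F y‖² ≤ (1 − λη)‖x − y‖²`. -/
theorem gradient_step_contraction
    (d : ℕ) (F : EuclideanSpace ℝ (Fin d) → ℝ)
    (gradF : EuclideanSpace ℝ (Fin d) → EuclideanSpace ℝ (Fin d))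
    (H lam : ℝ) (hH : 0 < H) (hlam : 0 ≤ lam)
    (hgrad : ∀ x, HasGradientAt F (gradF x) x)
    (hsc : ∀ x y, lam / 2 * ‖y - x‖ ^ 2 ≤ F y - F x - ⟪gradF x, y - x⟫)
    (hsm : ∀ x y, F y - F x - ⟪gradF x, y - x⟫ ≤ H / 2 * ‖y - x‖ ^ 2)
    (η : ℝ) (hη0 : 0 < η) (hη : η ≤ 1 / H) :
    ∀ x y : EuclideanSpace ℝ (Fin d),
      ‖x - η • gradF x - y + η • gradF y‖ ^ 2 ≤ (1 - lam * η) * ‖x - y‖ ^ 2 := by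
  intro x y
  set u := x - y with hu
  set g := gradF x - gradF y with hg
  -- strong monotonicity
  have hmono : lam * ‖u‖ ^ 2 ≤ ⟪g, u⟫ := by
    have h1 := hsc x y
    have h2 := hsc y x
    have e : ⟪g, u⟫ = -⟪gradF x, y - x⟫ - ⟪gradF y, x - y⟫ := by
      rw [hg, hu, inner_sub_left]
      rw [show y - x = -(x - y) by abel, inner_neg_right]
      ring
    have en : ‖y - x‖ = ‖u‖ := by rw [hu, ← norm_neg]; congr 1; abel
    rw [en] at h1
    rw [← hu] at h2
    nlinarith
  -- co-coercivity
  have hcoco : ‖g‖ ^ 2 ≤ H * ⟪g, u⟫ := by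
    have h1 := cocoercive_aux F gradF H lam hH hlam hsc hsm x y
    have h2 := cocoercive_aux F gradF H lam hH hlam hsc hsm y x
    have en : ‖gradF x - gradF y‖ = ‖g‖ := by rw [hg]
    have en2 : ‖gradF y - gradF x‖ = ‖g‖ := by rw [← norm_neg]; congr 1; rw [hg]; abel
    rw [en2] at h1
    rw [en] at h2
    have e : ⟪g, u⟫ = -⟪gradF x, y - x⟫ - ⟪gradF y, x - y⟫ := by
      rw [hg, hu, inner_sub_left]
      rw [show y - x = -(x - y) by abel, inner_neg_right]
      ring
    have hH' : H ≠ 0 := ne_of_gt hH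
    have hid2 : 1 / H * ‖g‖ ^ 2 = 2 * (1 / (2 * H) * ‖g‖ ^ 2) := by
      field_simp
    have : 1 / H * ‖g‖ ^ 2 ≤ ⟪g, u⟫ := by rw [e]; linarith
    calc ‖g‖ ^ 2 = H * (1 / H * ‖g‖ ^ 2) := by field_simp
      _ ≤ H * ⟪g, u⟫ := by exact mul_le_mul_of_nonneg_left this (le_of_lt hH)
  -- rewrite the step vector
  have hvec : x - η • gradF x - y + η • gradF y = u - η • g := by
    rw [hu, hg, smul_sub]; abel
  rw [hvec]
  have hexp : ‖u - η • g‖ ^ 2 = ‖u‖ ^ 2 - 2 * η * ⟪g, u⟫ + η ^ 2 * ‖g‖ ^ 2 := by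
    rw [norm_sub_sq_real, real_inner_smul_right, norm_smul]
    rw [real_inner_comm, mul_pow, Real.norm_eq_abs, abs_of_pos hη0]
    ring
  rw [hexp]
  have hηH : η * H ≤ 1 := (le_div_iff₀ hH).mp hη
  have hginner : (0:ℝ) ≤ ⟪g, u⟫ := by nlinarith [sq_nonneg ‖g‖]
  have h3 : η ^ 2 * ‖g‖ ^ 2 ≤ η * ⟪g, u⟫ := by
    have h4 : η * (η * ‖g‖ ^ 2) ≤ η * (η * (H * ⟪g, u⟫)) := by
      have := mul_le_mul_of_nonneg_left hcoco (le_of_lt hη0)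
      nlinarith
    have h5 : η * H * (η * ⟪g, u⟫) ≤ 1 * (η * ⟪g, u⟫) :=
      mul_le_mul_of_nonneg_right hηH (mul_nonneg hη0.le hginner)
    nlinarith
  nlinarith [mul_le_mul_of_nonneg_right hmono (le_of_lt hη0)]
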